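/- Let Ω_n be the set of equi-n-squares and Σ_n the set of consecutive equi-n-squares. The probability that a uniformly random equi-n-square is consecutive satisfies |Σ_n|/|Ω_n| ∼ 4·n^{n+1}·(n²−n)!/(n²)! as n → ∞; that is, (|Σ_n|/|Ω_n|) · (n²)! / (4·n^{n+1}·(n²−n)!) tends to 1 as n → ∞. -/

import Mathlib

open Nat Finset Filter

/-- An equi-`n`-square: an `n × n` array with entries in `Fin n` in which
every value appears exactly `n` times. -/
def IsEquiSquare (n : ℕ) (g : Fin n → Fin n → Fin n) : Prop :=
  ∀ k : Fin n, Nat.card {p : Fin n × Fin n // g p.1 p.2 = k} = n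

/-- Row `i` is consecutive (1-indexed: entry in column `j` is `j`). -/
def RowConsec {n : ℕ} (g : Fin n → Fin n → Fin n) (i : Fin n) : Prop :=
  ∀ j : Fin n, g i j = j

/-- Row `i` is reverse-consecutive (1-indexed: entry in column `j` is `n+1-j`). -/
def RowRevConsec {n : ℕ} (g : Fin n → Fin n → Fin n) (i : Fin n) : Prop :=
  ∀ j : Fin n, (g i j : ℕ) + (j : ℕ) + 1 = n

/-- Column `j` is consecutive (1-indexed: entry in row `i` is `i`). -/
def ColConsec {n : ℕ} (g : Fin n → Fin n → Fin n) (j : Fin n) : Prop :=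
  ∀ i : Fin n, g i j = i

/-- Column `j` is reverse-consecutive (1-indexed: entry in row `i` is `n+1-i`). -/
def ColRevConsec {n : ℕ} (g : Fin n → Fin n → Fin n) (j : Fin n) : Prop :=
  ∀ i : Fin n, (g i j : ℕ) + (i : ℕ) + 1 = n

/-- A consecutive equi-`n`-square: an equi-`n`-square with at least one consecutive or
reverse-consecutive row or column. -/
def IsConsecEquiSquare (n : ℕ) (g : Fin n → Fin n → Fin n) : Prop :=
  IsEquiSquare n g ∧
    ((∃ i : Fin n, RowConsec g i ∨ RowRevConsec g i) ∨
      (∃ j : Fin n, ColConsec g j ∨ ColRevConsec g j))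

/-- fiber of Sigma.fst equiv -/
def fstFiber {n : ℕ} (e : Fin n → ℕ) (k : Fin n) : {p : Σ i, Fin (e i) // p.1 = k} ≃ Fin (e k) where
  toFun p := Fin.cast (congrArg e p.2) p.1.2
  invFun x := ⟨⟨k, x⟩, rfl⟩
  left_inv := by rintro ⟨⟨i, x⟩, rfl⟩; rfl
  right_inv x := rfl

lemma count_mul_eq {β : Type} [Fintype β] [DecidableEq β] {n : ℕ} (e : Fin n → ℕ)
    (he : ∑ k, e k = Fintype.card β) :
    Nat.card {f : β → Fin n // ∀ k, Nat.card {b // f b = k} = e k} * ∏ k, (e k)! =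
      (Fintype.card β)! := by
  have hcard : Fintype.card β = Fintype.card (Σ i, Fin (e i)) := by
    simp [Fintype.card_sigma, he]
  let e0 : β ≃ Σ i, Fin (e i) := Fintype.equivOfCardEq hcard
  let f0 : β → Fin n := fun b => (e0 b).1
  have hfib0 : ∀ k, Nat.card {b // f0 b = k} = e k := by
    intro k
    rw [Nat.card_congr ((Equiv.subtypeEquiv e0 (fun b => Iff.rfl)).trans (fstFiber e k))]
    simp
  have key : ∀ (g : β → Fin n), (∀ k, Nat.card {b // g b = k} = e k) →
      Nat.card {σ : Equiv.Perm β // f0 ∘ σ = g} = ∏ k, (e k)! := by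
    intro g hg
    have efib : ∀ k, {b // g b = k} ≃ {b // f0 b = k} := by
      intro k
      apply Fintype.equivOfCardEq
      rw [← Nat.card_eq_fintype_card, ← Nat.card_eq_fintype_card, hg, hfib0]
    let τ : β ≃ β := Equiv.ofFiberEquiv efib
    have hτ : ∀ b, f0 (τ b) = g b := fun b => Equiv.ofFiberEquiv_map efib b
    have : {σ : Equiv.Perm β // f0 ∘ σ = g} ≃ {σ : Equiv.Perm β // f0 ∘ σ = f0} := by
      refine Equiv.subtypeEquiv (Equiv.mulRight τ⁻¹) (fun σ => ?_)
      constructor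
      · intro h; funext b
        have : f0 (σ (τ⁻¹ b)) = g (τ⁻¹ b) := congrFun h (τ⁻¹ b)
        simpa [Equiv.Perm.mul_apply, this, ← hτ b] using this.trans (by rw [← hτ (τ⁻¹ b)]; simp)
      · intro h; funext b
        have h1 : f0 (σ (τ⁻¹ (τ b))) = f0 (τ b) := congrFun h (τ b)
        simpa [hτ b] using h1
    rw [Nat.card_congr this, Nat.card_eq_fintype_card, DomMulAct.stabilizer_card]
    exact Finset.prod_congr rfl fun k _ => by rw [← Nat.card_eq_fintype_card, hfib0]
  -- total count
  have hΦ : ∀ σ : Equiv.Perm β, ∀ k, Nat.card {b // (f0 ∘ σ) b = k} = e k := by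
    intro σ k
    exact (Nat.card_congr (Equiv.subtypeEquiv σ (fun b => Iff.rfl))).trans (hfib0 k)
  let F := {f : β → Fin n // ∀ k, Nat.card {b // f b = k} = e k}
  let Φ : Equiv.Perm β → F := fun σ => ⟨f0 ∘ σ, hΦ σ⟩
  classical
  have htot := Nat.card_congr (Equiv.sigmaFiberEquiv Φ)
  rw [Nat.card_eq_fintype_card (α := Equiv.Perm β), Fintype.card_perm] at htot
  have hsig : Nat.card ((y : F) × {x // Φ x = y}) = ∑ g : F, Nat.card {σ : Equiv.Perm β // Φ σ = g} := by
    rw [Nat.card_eq_fintype_card, Fintype.card_sigma]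
    exact Finset.sum_congr rfl fun g _ => (Nat.card_eq_fintype_card).symm
  have hfibΦ : ∀ g : F, Nat.card {σ : Equiv.Perm β // Φ σ = g} = ∏ k, (e k)! := by
    intro g
    refine (Nat.card_congr (Equiv.subtypeEquiv (Equiv.refl _) (fun σ => ?_))).trans (key g.1 g.2)
    rw [Subtype.ext_iff]; exact Iff.rfl
  rw [← htot, hsig, Finset.sum_congr rfl (fun g _ => hfibΦ g), Finset.sum_const,
    Finset.card_univ, smul_eq_mul, Nat.card_eq_fintype_card]


lemma sum_card_fibers {γ : Type} [Fintype γ] [DecidableEq γ] {n : ℕ} (u : γ → Fin n) :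
    ∑ k, Nat.card {x // u x = k} = Fintype.card γ := by
  classical
  rw [← Nat.card_eq_fintype_card, ← Nat.card_congr (Equiv.sigmaFiberEquiv u),
    Nat.card_eq_fintype_card, Fintype.card_sigma]
  exact Finset.sum_congr rfl fun k _ => Nat.card_eq_fintype_card

lemma fixed_count {n : ℕ} {γ : Type} [Fintype γ] [DecidableEq γ] (w : γ → Fin n × Fin n)
    (hw : Function.Injective w) (u : γ → Fin n) (hd : ∀ k, Nat.card {x // u x = k} ≤ n) :
    Nat.card {g : Fin n → Fin n → Fin n //
        (∀ x, g (w x).1 (w x).2 = u x) ∧ IsEquiSquare n g} *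
      ∏ k, (n - Nat.card {x // u x = k})! = (n ^ 2 - Fintype.card γ)! := by
  classical
  set d : Fin n → ℕ := fun k => Nat.card {x // u x = k} with hdef
  -- the complement of the fixed cells
  let S := {p : Fin n × Fin n // p ∉ Set.range w}
  have hcardγ : Fintype.card γ ≤ n ^ 2 := by
    calc Fintype.card γ = Fintype.card (Set.range w) := (Fintype.card_congr (Equiv.ofInjective w hw))
    _ ≤ Fintype.card (Fin n × Fin n) := Fintype.card_le_of_injective _ Subtype.val_injective
    _ = n ^ 2 := by simp [sq]
  have hcardS : Fintype.card S = n ^ 2 - Fintype.card γ := by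
    have h1 : Fintype.card {p : Fin n × Fin n // p ∈ Set.range w} = Fintype.card γ := by
      rw [Fintype.card_congr (Equiv.subtypeEquivRight (q := (· ∈ Set.range w)) (fun p => Iff.rfl))]
      exact (Fintype.card_congr (Equiv.ofInjective w hw)).symm
    have := Fintype.card_subtype_compl (p := fun p : Fin n × Fin n => p ∈ Set.range w)
    calc Fintype.card S = Fintype.card {p : Fin n × Fin n // ¬ p ∈ Set.range w} :=
          Fintype.card_congr (Equiv.subtypeEquivRight (fun p => Iff.rfl))
    _ = Fintype.card (Fin n × Fin n) - Fintype.card {p : Fin n × Fin n // p ∈ Set.range w} := this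
    _ = n ^ 2 - Fintype.card γ := by rw [h1]; simp [sq]
  -- splitting fibers
  have split : ∀ (g : Fin n → Fin n → Fin n), (∀ x, g (w x).1 (w x).2 = u x) → ∀ k,
      Nat.card {p : Fin n × Fin n // g p.1 p.2 = k} =
        d k + Nat.card {s : S // g s.1.1 s.1.2 = k} := by
    intro g hg k
    have e1 : {p : Fin n × Fin n // g p.1 p.2 = k} ≃
        {q : {p : Fin n × Fin n // g p.1 p.2 = k} // q.1 ∈ Set.range w} ⊕
        {q : {p : Fin n × Fin n // g p.1 p.2 = k} // ¬ q.1 ∈ Set.range w} :=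
      (Equiv.sumCompl _).symm
    have eA : {x // u x = k} ≃ {q : {p : Fin n × Fin n // g p.1 p.2 = k} // q.1 ∈ Set.range w} := by
      refine Equiv.ofBijective (fun x => ⟨⟨w x.1, by
        show g (w x.1).1 (w x.1).2 = k
        rw [hg x.1, x.2]⟩, ⟨x.1, rfl⟩⟩) ⟨?_, ?_⟩
      · intro x y hxy
        apply Subtype.ext
        exact hw (congrArg (fun q => q.1.1) hxy)
      · rintro ⟨⟨p, hp⟩, hx⟩
        obtain ⟨x, hxp⟩ := hx
        refine ⟨⟨x, ?_⟩, ?_⟩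
        · rw [← hg x, hxp]; exact hp
        · apply Subtype.ext; apply Subtype.ext; exact hxp
    have eB : {q : {p : Fin n × Fin n // g p.1 p.2 = k} // ¬ q.1 ∈ Set.range w} ≃
        {s : S // g s.1.1 s.1.2 = k} :=
      ⟨fun q => ⟨⟨q.1.1, q.2⟩, q.1.2⟩, fun s => ⟨⟨s.1.1, s.2⟩, s.1.2⟩,
        fun q => rfl, fun s => rfl⟩
    rw [Nat.card_congr e1, Nat.card_eq_fintype_card, Fintype.card_sum,
      ← Nat.card_eq_fintype_card (α := {q : {p : Fin n × Fin n // g p.1 p.2 = k} // q.1 ∈ Set.range w}),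
      ← Nat.card_eq_fintype_card, ← Nat.card_congr eA, Nat.card_congr eB]
  -- main equivalence
  have hd' : ∀ k, d k ≤ n := hd
  have E : {g : Fin n → Fin n → Fin n // (∀ x, g (w x).1 (w x).2 = u x) ∧ IsEquiSquare n g} ≃
      {f : S → Fin n // ∀ k, Nat.card {s // f s = k} = n - d k} := by
    refine Equiv.ofBijective (fun g => ⟨fun s => g.1 s.1.1 s.1.2, fun k => ?_⟩) ⟨?_, ?_⟩
    · show Nat.card {s : S // g.1 s.1.1 s.1.2 = k} = n - d k
      have h1 := g.2.2 k
      rw [split g.1 g.2.1 k] at h1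
      have := hd' k
      omega
    · -- injective
      intro g g' h
      have hval := congrArg Subtype.val h
      apply Subtype.ext
      funext i j
      by_cases hmem : ((i, j) : Fin n × Fin n) ∈ Set.range w
      · obtain ⟨x, hx⟩ := hmem
        have h1 := g.2.1 x
        have h2 := g'.2.1 x
        rw [hx] at h1 h2
        exact h1.trans h2.symm
      · exact congrFun hval ⟨(i, j), hmem⟩
    · -- surjective
      intro f
      set G : Fin n → Fin n → Fin n := fun i j =>
        if h : ((i, j) : Fin n × Fin n) ∈ Set.range w then u h.choose else f.1 ⟨(i, j), h⟩ with hG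
      have hfix : ∀ x, G (w x).1 (w x).2 = u x := by
        intro x
        have hx : (((w x).1, (w x).2) : Fin n × Fin n) ∈ Set.range w := ⟨x, by simp⟩
        show (if h : (((w x).1, (w x).2) : Fin n × Fin n) ∈ Set.range w then u h.choose
          else f.1 ⟨((w x).1, (w x).2), h⟩) = u x
        rw [dif_pos hx]
        congr 1
        exact hw hx.choose_spec
      have hres : ∀ s : S, G s.1.1 s.1.2 = f.1 s := by
        intro s
        have hs : ¬ ((s.1.1, s.1.2) : Fin n × Fin n) ∈ Set.range w := by simpa using s.2
        show (if h : ((s.1.1, s.1.2) : Fin n × Fin n) ∈ Set.range w then u h.choose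
          else f.1 ⟨(s.1.1, s.1.2), h⟩) = f.1 s
        rw [dif_neg hs]
      have hequi : IsEquiSquare n G := by
        intro k
        rw [split G hfix k]
        have hc : Nat.card {s : S // G s.1.1 s.1.2 = k} = Nat.card {s : S // f.1 s = k} :=
          Nat.card_congr (Equiv.subtypeEquivRight (fun s => by rw [hres s]))
        rw [hc, f.2 k]
        have := hd' k
        omega
      exact ⟨⟨G, hfix, hequi⟩, Subtype.ext (funext fun s => hres s)⟩
  rw [Nat.card_congr E]
  have hsum : ∑ k, (n - d k) = Fintype.card S := by
    have h1 : ∑ k, d k = Fintype.card γ := sum_card_fibers u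
    have h2 : ∑ k, ((n - d k) + d k) = ∑ k : Fin n, n := by
      refine Finset.sum_congr rfl fun k _ => ?_
      have := hd' k; omega
    rw [Finset.sum_add_distrib, h1] at h2
    simp only [Finset.sum_const, Finset.card_univ, Fintype.card_fin, smul_eq_mul] at h2
    rw [hcardS]
    have : n * n = n ^ 2 := (sq n).symm
    omega
  have := count_mul_eq (β := S) (fun k => n - d k) hsum
  rw [this, hcardS]
/-- Index type for the `4n` conditions: (isColumn, isReversed, line index). -/
abbrev CondIdx (n : ℕ) := Bool × Bool × Fin n

def lineMap {n : ℕ} (c : CondIdx n) : Fin n → Fin n × Fin n :=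
  fun t => if c.1 then (t, c.2.2) else (c.2.2, t)

def valMap {n : ℕ} (c : CondIdx n) : Fin n → Fin n :=
  fun t => if c.2.1 then t.rev else t

def Cond {n : ℕ} (c : CondIdx n) (g : Fin n → Fin n → Fin n) : Prop :=
  ∀ t, g (lineMap c t).1 (lineMap c t).2 = valMap c t

lemma valMap_eq_perm {n : ℕ} (c : CondIdx n) :
    valMap c = ⇑(if c.2.1 then Fin.revPerm else Equiv.refl (Fin n)) := by
  funext t; cases h : c.2.1 <;> simp [valMap, h]

lemma lineMap_injective {n : ℕ} (c : CondIdx n) : Function.Injective (lineMap c) := by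
  intro a b hab
  cases h : c.1 <;> simp [lineMap, h, Prod.ext_iff] at hab <;> tauto

lemma valMap_fiber_card {n : ℕ} (c : CondIdx n) (k : Fin n) :
    Nat.card {t // valMap c t = k} = 1 := by
  rw [valMap_eq_perm]
  set e := if c.2.1 then Fin.revPerm else Equiv.refl (Fin n)
  have : ∀ t, e t = k ↔ t = e.symm k := fun t => by
    rw [← Equiv.apply_eq_iff_eq_symm_apply]
  rw [Nat.card_congr (Equiv.subtypeEquivRight this), Nat.card_eq_fintype_card,
    Fintype.card_subtype_eq]

lemma consec_iff {n : ℕ} (g : Fin n → Fin n → Fin n) :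
    IsConsecEquiSquare n g ↔ IsEquiSquare n g ∧ ∃ c : CondIdx n, Cond c g := by
  have hrev : ∀ (a t : Fin n), (a = t.rev ↔ (a : ℕ) + (t : ℕ) + 1 = n) := by
    intro a t
    rw [Fin.ext_iff, Fin.val_rev]
    have := a.2; have := t.2
    omega
  constructor
  · rintro ⟨he, h⟩
    refine ⟨he, ?_⟩
    rcases h with (⟨i, hi | hi⟩ | ⟨j, hj | hj⟩)
    · exact ⟨(false, false, i), fun t => by simpa [Cond, lineMap, valMap] using hi t⟩
    · exact ⟨(false, true, i), fun t => by
        simp only [Cond, lineMap, valMap, if_neg Bool.false_ne_true, if_pos rfl]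
        simpa [hrev] using hi t⟩
    · exact ⟨(true, false, j), fun t => by simpa [Cond, lineMap, valMap] using hj t⟩
    · exact ⟨(true, true, j), fun t => by
        simp only [Cond, lineMap, valMap, if_pos rfl]
        simpa [hrev] using hj t⟩
  · rintro ⟨he, ⟨⟨b1, b2, i⟩, hc⟩⟩
    refine ⟨he, ?_⟩
    cases b1 <;> cases b2
    · exact Or.inl ⟨i, Or.inl fun t => by simpa [Cond, lineMap, valMap] using hc t⟩
    · exact Or.inl ⟨i, Or.inr fun t => by
        have := hc t
        simp only [Cond, lineMap, valMap, if_neg Bool.false_ne_true, if_pos rfl] at this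
        exact (hrev _ t).mp (by simpa using this)⟩
    · exact Or.inr ⟨i, Or.inl fun t => by simpa [Cond, lineMap, valMap] using hc t⟩
    · exact Or.inr ⟨i, Or.inr fun t => by
        have := hc t
        simp only [Cond, lineMap, valMap, if_pos rfl] at this
        exact (hrev _ t).mp (by simpa using this)⟩

lemma card_single_cond {n : ℕ} (c : CondIdx n) :
    Nat.card {g : Fin n → Fin n → Fin n // Cond c g ∧ IsEquiSquare n g} * ((n - 1)! ) ^ n =
      (n ^ 2 - n)! := by
  have hd : ∀ k, Nat.card {t // valMap c t = k} ≤ n := by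
    intro k
    rw [valMap_fiber_card]
    rcases Nat.eq_zero_or_pos n with h | h
    · exact absurd (Fin.pos k) (by omega)
    · exact h
  have := fixed_count (lineMap c) (lineMap_injective c) (valMap c) hd
  simp only [valMap_fiber_card, Fintype.card_fin] at this
  rw [← this, Finset.prod_const, Finset.card_univ, Fintype.card_fin]
  rfl
lemma valMap_injective {n : ℕ} (c : CondIdx n) : Function.Injective (valMap c) := by
  rw [valMap_eq_perm]; exact (if c.2.1 then Fin.revPerm else Equiv.refl (Fin n)).injective

lemma card_pair_cond {n : ℕ} (hn : 2 ≤ n) {c c' : CondIdx n} (hcc : c ≠ c') :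
    Nat.card {g : Fin n → Fin n → Fin n // (Cond c g ∧ Cond c' g) ∧ IsEquiSquare n g} *
      ((n - 2)!) ^ n ≤ (n ^ 2 - (2 * n - 1))! := by
  classical
  by_cases hsame : c.1 = c'.1 ∧ c.2.2 = c'.2.2
  · -- same line, different direction: empty
    rcases hsame with ⟨hb, hi⟩
    have hrevne : c.2.1 ≠ c'.2.1 := by
      intro h; exact hcc (Prod.ext hb (Prod.ext h hi))
    have hline : lineMap c' = lineMap c := by
      funext t
      rw [lineMap, lineMap, show c'.1 = c.1 from hb.symm, show c'.2.2 = c.2.2 from hi.symm]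
    have hempty : IsEmpty {g : Fin n → Fin n → Fin n //
        (Cond c g ∧ Cond c' g) ∧ IsEquiSquare n g} := by
      refine ⟨?_⟩
      rintro ⟨g, ⟨h1, h2⟩, -⟩
      set t0 : Fin n := ⟨0, by omega⟩ with ht0
      have e1 := h1 t0
      have e2 := h2 t0
      rw [hline] at e2
      have heq : valMap c t0 = valMap c' t0 := e1.symm.trans e2
      have h0 : (0 : ℕ) ≠ n - 1 := by omega
      cases hb1 : c.2.1 <;> cases hb2 : c'.2.1 <;>
        simp [valMap, hb1, hb2, Fin.ext_iff, Fin.val_rev, ht0] at heq hrevne <;> omega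
    rw [Nat.card_of_isEmpty, zero_mul]
    exact Nat.zero_le _
  · -- distinct lines
    have hsub : ∀ t1 t2 : Fin n, lineMap c' t1 ∈ Set.range (lineMap c) →
        lineMap c' t2 ∈ Set.range (lineMap c) → t1 = t2 := by
      rintro t1 t2 ⟨s1, hs1⟩ ⟨s2, hs2⟩
      cases hb : c.1 <;> cases hb' : c'.1 <;>
        simp [lineMap, hb, hb', Prod.ext_iff] at hs1 hs2
      · exact absurd ⟨by rw [hb, hb'], hs1.1⟩ hsame
      · rw [← hs1.1, ← hs2.1]
      · rw [← hs1.2, ← hs2.2]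
      · exact absurd ⟨by rw [hb, hb'], hs1.2⟩ hsame
    set T := {t : Fin n // lineMap c' t ∉ Set.range (lineMap c)} with hT
    set w : Fin n ⊕ T → Fin n × Fin n := Sum.elim (lineMap c) (fun t => lineMap c' t.1) with hw
    set u : Fin n ⊕ T → Fin n := Sum.elim (valMap c) (fun t => valMap c' t.1) with hu
    have hwinj : Function.Injective w := by
      rintro (a | a) (b | b) h
      · rw [lineMap_injective c h]
      · exact absurd ⟨a, h⟩ b.2
      · exact absurd ⟨b, h.symm⟩ a.2
      · rw [Subtype.ext (lineMap_injective c' h)]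
    have hd2 : ∀ k, Nat.card {x // u x = k} ≤ 2 := by
      intro k
      have e1 : {x // u x = k} ≃
          {a : Fin n // valMap c a = k} ⊕ {b : T // valMap c' b.1 = k} := Equiv.subtypeSum
      rw [Nat.card_congr e1, Nat.card_eq_fintype_card, Fintype.card_sum,
        ← Nat.card_eq_fintype_card (α := {a : Fin n // valMap c a = k}), valMap_fiber_card]
      have : Fintype.card {b : T // valMap c' b.1 = k} ≤ 1 := by
        rw [Fintype.card_le_one_iff_subsingleton]
        constructor
        rintro ⟨b1, h1⟩ ⟨b2, h2⟩
        apply Subtype.ext; apply Subtype.ext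
        exact valMap_injective c' (h1.trans h2.symm)
      omega
    have hd : ∀ k, Nat.card {x // u x = k} ≤ n := fun k => le_trans (hd2 k) hn
    have hcount := fixed_count w hwinj u hd
    have hmono : Nat.card {g : Fin n → Fin n → Fin n //
          (Cond c g ∧ Cond c' g) ∧ IsEquiSquare n g} ≤
        Nat.card {g : Fin n → Fin n → Fin n //
          (∀ x, g (w x).1 (w x).2 = u x) ∧ IsEquiSquare n g} := by
      rw [Nat.card_eq_fintype_card, Nat.card_eq_fintype_card]
      apply Fintype.card_subtype_mono
      rintro g ⟨⟨h1, h2⟩, h3⟩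
      refine ⟨?_, h3⟩
      rintro (a | a)
      · exact h1 a
      · exact h2 a.1
    have h1 : Fintype.card {t : Fin n // lineMap c' t ∈ Set.range (lineMap c)} ≤ 1 := by
      rw [Fintype.card_le_one_iff_subsingleton]
      exact ⟨fun a b => Subtype.ext (hsub a.1 b.1 a.2 b.2)⟩
    have hcardT : Fintype.card T =
        n - Fintype.card {t : Fin n // lineMap c' t ∈ Set.range (lineMap c)} := by
      rw [show Fintype.card T =
          Fintype.card {t : Fin n // ¬ lineMap c' t ∈ Set.range (lineMap c)} from
        Fintype.card_congr (Equiv.subtypeEquivRight fun t => Iff.rfl),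
        Fintype.card_subtype_compl, Fintype.card_fin]
    have hγ : 2 * n - 1 ≤ Fintype.card (Fin n ⊕ T) := by
      rw [Fintype.card_sum, Fintype.card_fin, hcardT]
      have h2 : n - 1 ≤ n - Fintype.card {t : Fin n // lineMap c' t ∈ Set.range (lineMap c)} :=
        Nat.sub_le_sub_left h1 n
      calc 2 * n - 1 = n + (n - 1) := by rw [Nat.two_mul]; exact Nat.add_sub_assoc (le_trans one_le_two hn) n
        _ ≤ n + (n - Fintype.card {t : Fin n // lineMap c' t ∈ Set.range (lineMap c)}) :=
            Nat.add_le_add_left h2 n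
    have hprod : ((n - 2)!) ^ n = ∏ _k : Fin n, (n - 2)! := by
      rw [Finset.prod_const, Finset.card_univ, Fintype.card_fin]
    calc Nat.card {g : Fin n → Fin n → Fin n //
          (Cond c g ∧ Cond c' g) ∧ IsEquiSquare n g} * ((n - 2)!) ^ n
        ≤ Nat.card {g : Fin n → Fin n → Fin n //
          (∀ x, g (w x).1 (w x).2 = u x) ∧ IsEquiSquare n g} *
            ∏ k, (n - Nat.card {x // u x = k})! := by
          apply Nat.mul_le_mul hmono
          rw [hprod]
          refine Finset.prod_le_prod' fun k _ => ?_
          exact Nat.factorial_le (Nat.sub_le_sub_left (hd2 k) n)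
      _ = (n ^ 2 - Fintype.card (Fin n ⊕ T))! := hcount
      _ ≤ (n ^ 2 - (2 * n - 1))! := Nat.factorial_le (Nat.sub_le_sub_left hγ _)
lemma bonferroni {α ι : Type} [Fintype α] [Fintype ι] [DecidableEq α] [DecidableEq ι]
    (A : ι → Finset α) :
    ∑ c, (A c).card ≤ (Finset.univ.biUnion A).card +
      ∑ p ∈ (Finset.univ (α := ι)).offDiag, (A p.1 ∩ A p.2).card := by
  classical
  set U := Finset.univ.biUnion A with hU
  have hsub : ∀ c, A c ⊆ U := fun c x hx => Finset.mem_biUnion.2 ⟨c, Finset.mem_univ c, hx⟩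
  have hfilter : ∀ c, U.filter (· ∈ A c) = A c := by
    intro c; ext x; simp only [Finset.mem_filter]
    exact ⟨fun h => h.2, fun h => ⟨hsub c h, h⟩⟩
  have h1 : ∑ c, (A c).card = ∑ x ∈ U, (Finset.univ.filter (fun c => x ∈ A c)).card := by
    calc ∑ c, (A c).card = ∑ c, ∑ x ∈ U, (if x ∈ A c then 1 else 0) := by
          refine Finset.sum_congr rfl fun c _ => ?_
          rw [← Finset.card_filter, hfilter]
    _ = ∑ x ∈ U, ∑ c, (if x ∈ A c then 1 else 0) := Finset.sum_comm
    _ = ∑ x ∈ U, (Finset.univ.filter (fun c => x ∈ A c)).card := by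
          refine Finset.sum_congr rfl fun x _ => ?_
          rw [Finset.card_filter]
  have h3 : ∑ x ∈ U, ((Finset.univ.filter (fun c => x ∈ A c)).offDiag).card =
      ∑ p ∈ (Finset.univ (α := ι)).offDiag, (A p.1 ∩ A p.2).card := by
    calc ∑ x ∈ U, ((Finset.univ.filter (fun c => x ∈ A c)).offDiag).card
        = ∑ x ∈ U, ∑ p ∈ (Finset.univ (α := ι)).offDiag,
            (if x ∈ A p.1 ∩ A p.2 then 1 else 0) := by
          refine Finset.sum_congr rfl fun x _ => ?_
          have : (Finset.univ.filter (fun c => x ∈ A c)).offDiag =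
              (Finset.univ (α := ι)).offDiag.filter (fun p => x ∈ A p.1 ∩ A p.2) := by
            ext p
            simp only [Finset.mem_offDiag, Finset.mem_filter, Finset.mem_inter, Finset.mem_univ,
              true_and]
            tauto
          rw [this, ← Finset.card_filter]
    _ = ∑ p ∈ (Finset.univ (α := ι)).offDiag, ∑ x ∈ U, (if x ∈ A p.1 ∩ A p.2 then 1 else 0) :=
          Finset.sum_comm
    _ = ∑ p ∈ (Finset.univ (α := ι)).offDiag, (A p.1 ∩ A p.2).card := by
          refine Finset.sum_congr rfl fun p _ => ?_
          rw [← Finset.card_filter]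
          congr 1
          ext x; simp only [Finset.mem_filter, Finset.mem_inter]
          exact ⟨fun h => h.2, fun h => ⟨hsub p.1 h.1, h⟩⟩
  have h2 : ∀ x ∈ U, (Finset.univ.filter (fun c => x ∈ A c)).card ≤
      1 + ((Finset.univ.filter (fun c => x ∈ A c)).offDiag).card := by
    intro x hx
    obtain ⟨c, -, hc⟩ := Finset.mem_biUnion.1 hx
    have hpos : 1 ≤ (Finset.univ.filter (fun c => x ∈ A c)).card :=
      Finset.card_pos.2 ⟨c, Finset.mem_filter.2 ⟨Finset.mem_univ c, hc⟩⟩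
    rw [Finset.offDiag_card]
    set m := (Finset.univ.filter (fun c => x ∈ A c)).card
    have : m ≤ 1 + (m * m - m) := by nlinarith [Nat.sub_add_cancel (Nat.le_mul_of_pos_left m hpos)]
    omega
  calc ∑ c, (A c).card = ∑ x ∈ U, (Finset.univ.filter (fun c => x ∈ A c)).card := h1
    _ ≤ ∑ x ∈ U, (1 + ((Finset.univ.filter (fun c => x ∈ A c)).offDiag).card) :=
        Finset.sum_le_sum h2
    _ = U.card + ∑ x ∈ U, ((Finset.univ.filter (fun c => x ∈ A c)).offDiag).card := by
        rw [Finset.sum_add_distrib, Finset.sum_const, smul_eq_mul, mul_one]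
    _ = U.card + ∑ p ∈ (Finset.univ (α := ι)).offDiag, (A p.1 ∩ A p.2).card := by rw [h3]
lemma equisquare_count (n : ℕ) :
    Nat.card {g : Fin n → Fin n → Fin n // IsEquiSquare n g} * ((n)!) ^ n = (n ^ 2)! := by
  classical
  have hcurry : {g : Fin n → Fin n → Fin n // IsEquiSquare n g} ≃
      {f : Fin n × Fin n → Fin n // ∀ k, Nat.card {p // f p = k} = n} := by
    refine Equiv.subtypeEquiv (Equiv.curry (Fin n) (Fin n) (Fin n)).symm fun g => ?_
    exact forall_congr' fun k => Iff.rfl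
  rw [Nat.card_congr hcurry]
  have h := count_mul_eq (β := Fin n × Fin n) (fun _ : Fin n => n)
    (by simp [Finset.sum_const, Fintype.card_prod, sq])
  simp only [Fintype.card_prod, Fintype.card_fin] at h
  rw [← sq] at h
  rw [← h, Finset.prod_const, Finset.card_univ, Fintype.card_fin]

set_option maxHeartbeats 1000000 in
lemma master (n : ℕ) (hn : 3 ≤ n) :
    ∃ N K R : ℕ,
      Nat.card {g : Fin n → Fin n → Fin n // IsConsecEquiSquare n g} = N ∧
      K * ((n - 1)!) ^ n = (n ^ 2 - n)! ∧
      N ≤ 4 * n * K ∧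
      4 * n * K ≤ N + R ∧
      R * 2 ^ (n - 2) ≤ 16 * n ^ 2 * K := by
  classical
  have hn2 : 2 ≤ n := by omega
  have hnsq : 2 * n - 1 ≤ n ^ 2 := by
    calc 2 * n - 1 ≤ 2 * n := Nat.sub_le _ _
      _ ≤ n * n := by nlinarith
      _ = n ^ 2 := (sq n).symm
  set A : CondIdx n → Finset (Fin n → Fin n → Fin n) :=
    fun c => Finset.univ.filter (fun g => Cond c g ∧ IsEquiSquare n g) with hA
  have hNA : ∀ c, Nat.card {g : Fin n → Fin n → Fin n // Cond c g ∧ IsEquiSquare n g} =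
      (A c).card := fun c => Nat.card_eq_fintype_card.trans (Fintype.card_subtype _)
  have hfacpos : 0 < ((n - 1)!) ^ n := pow_pos (Nat.factorial_pos _) n
  have hAmul : ∀ c, (A c).card * ((n - 1)!) ^ n = (n ^ 2 - n)! := by
    intro c; rw [← hNA]; exact card_single_cond c
  set c0 : CondIdx n := (false, false, ⟨0, by omega⟩) with hc0
  set K := (A c0).card with hK
  have hKc : ∀ c, (A c).card = K :=
    fun c => Nat.eq_of_mul_eq_mul_right hfacpos ((hAmul c).trans (hAmul c0).symm)
  have hKmul : K * ((n - 1)!) ^ n = (n ^ 2 - n)! := hAmul c0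
  have hsum : ∑ c, (A c).card = 4 * n * K := by
    rw [Finset.sum_congr rfl fun c _ => hKc c, Finset.sum_const, Finset.card_univ, smul_eq_mul]
    have : Fintype.card (CondIdx n) = 4 * n := by
      simp [Fintype.card_prod, Fintype.card_bool, Fintype.card_fin]; ring
    rw [this]
  set N := (Finset.univ.filter (fun g => IsConsecEquiSquare n g)).card with hNdef
  have hN : Nat.card {g : Fin n → Fin n → Fin n // IsConsecEquiSquare n g} = N :=
    Nat.card_eq_fintype_card.trans (Fintype.card_subtype _)
  have hUnion : Finset.univ.filter (fun g => IsConsecEquiSquare n g) = Finset.univ.biUnion A := by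
    ext g
    simp only [Finset.mem_filter, Finset.mem_univ, true_and, Finset.mem_biUnion, hA]
    rw [consec_iff g]
    tauto
  have hupper : N ≤ 4 * n * K := by
    rw [hNdef, hUnion, ← hsum]
    exact Finset.card_biUnion_le
  set R := ∑ p ∈ (Finset.univ (α := CondIdx n)).offDiag, (A p.1 ∩ A p.2).card with hR
  have hlower : 4 * n * K ≤ N + R := by
    rw [← hsum, hNdef, hUnion]
    exact bonferroni A
  have hpair : ∀ p ∈ (Finset.univ (α := CondIdx n)).offDiag,
      (A p.1 ∩ A p.2).card * ((n - 2)!) ^ n ≤ (n ^ 2 - (2 * n - 1))! := by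
    intro p hp
    have hne : p.1 ≠ p.2 := (Finset.mem_offDiag.1 hp).2.2
    have hinter : A p.1 ∩ A p.2 =
        Finset.univ.filter (fun g => (Cond p.1 g ∧ Cond p.2 g) ∧ IsEquiSquare n g) := by
      ext g; simp only [Finset.mem_inter, Finset.mem_filter, Finset.mem_univ, true_and, hA]
      tauto
    have hcardi : (A p.1 ∩ A p.2).card =
        Nat.card {g : Fin n → Fin n → Fin n // (Cond p.1 g ∧ Cond p.2 g) ∧ IsEquiSquare n g} := by
      rw [hinter, Nat.card_eq_fintype_card, Fintype.card_subtype]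
    rw [hcardi]
    exact card_pair_cond hn2 hne
  have hRmul : R * ((n - 2)!) ^ n ≤ 16 * n ^ 2 * (n ^ 2 - (2 * n - 1))! := by
    rw [hR, Finset.sum_mul]
    calc ∑ p ∈ (Finset.univ (α := CondIdx n)).offDiag, (A p.1 ∩ A p.2).card * ((n - 2)!) ^ n
        ≤ ∑ _p ∈ (Finset.univ (α := CondIdx n)).offDiag, (n ^ 2 - (2 * n - 1))! :=
          Finset.sum_le_sum hpair
      _ = (Finset.univ (α := CondIdx n)).offDiag.card * (n ^ 2 - (2 * n - 1))! := by
          rw [Finset.sum_const, smul_eq_mul]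
      _ ≤ 16 * n ^ 2 * (n ^ 2 - (2 * n - 1))! := by
          apply Nat.mul_le_mul_right
          rw [Finset.offDiag_card, Finset.card_univ]
          have : Fintype.card (CondIdx n) = 4 * n := by
            simp [Fintype.card_prod, Fintype.card_bool, Fintype.card_fin]; ring
          rw [this]
          calc 4 * n * (4 * n) - 4 * n ≤ 4 * n * (4 * n) := Nat.sub_le _ _
            _ = 16 * n ^ 2 := by ring
  -- factorial growth: (n^2-(2n-1))! * ((n-1)^2)^(n-1) ≤ (n^2-n)!
  have hgrow : (n ^ 2 - (2 * n - 1))! * ((n - 1) ^ 2) ^ (n - 1) ≤ (n ^ 2 - n)! := by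
    have h1 := Nat.factorial_mul_pow_le_factorial (m := n ^ 2 - (2 * n - 1)) (n := n - 1)
    have he : n ^ 2 - (2 * n - 1) + (n - 1) = n ^ 2 - n := by omega
    rw [he] at h1
    refine le_trans (Nat.mul_le_mul_left _ (Nat.pow_le_pow_left ?_ _)) h1
    have h2 : (n - 1) ^ 2 + (2 * n - 1) = n ^ 2 := by
      obtain ⟨m, rfl⟩ : ∃ m, n = m + 1 := ⟨n - 1, by omega⟩
      simp only [Nat.add_sub_cancel]
      have e1 : (m + 1) ^ 2 = m ^ 2 + 2 * m + 1 := by ring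
      omega
    omega
  -- combine: R * (n-1)^(n-2) ≤ 16 n^2 K
  have hcomb : R * (n - 1) ^ (n - 2) ≤ 16 * n ^ 2 * K := by
    have hfacsplit : ((n - 1)!) ^ n = (n - 1) ^ n * ((n - 2)!) ^ n := by
      rw [← Nat.mul_pow]
      congr 1
      have : n - 1 = (n - 2) + 1 := by omega
      rw [this, Nat.factorial_succ]
    have hpow : (n - 1) ^ (n - 2) * (n - 1) ^ n = ((n - 1) ^ 2) ^ (n - 1) := by
      rw [← pow_add, ← pow_mul]
      congr 1
      omega
    have key : (R * (n - 1) ^ (n - 2)) * (((n - 2)!) ^ n * (n - 1) ^ n) ≤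
        (16 * n ^ 2 * K) * (((n - 2)!) ^ n * (n - 1) ^ n) := by
      calc (R * (n - 1) ^ (n - 2)) * (((n - 2)!) ^ n * (n - 1) ^ n)
          = (R * ((n - 2)!) ^ n) * ((n - 1) ^ (n - 2) * (n - 1) ^ n) := by ring
        _ ≤ (16 * n ^ 2 * (n ^ 2 - (2 * n - 1))!) * ((n - 1) ^ (n - 2) * (n - 1) ^ n) :=
            Nat.mul_le_mul_right _ hRmul
        _ = (16 * n ^ 2) * ((n ^ 2 - (2 * n - 1))! * ((n - 1) ^ 2) ^ (n - 1)) := by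
            rw [hpow]; ring
        _ ≤ (16 * n ^ 2) * (n ^ 2 - n)! := Nat.mul_le_mul_left _ hgrow
        _ = (16 * n ^ 2) * (K * ((n - 1)!) ^ n) := by rw [hKmul]
        _ = (16 * n ^ 2 * K) * (((n - 2)!) ^ n * (n - 1) ^ n) := by
            rw [hfacsplit]; ring
    have hpos : 0 < ((n - 2)!) ^ n * (n - 1) ^ n := by
      apply Nat.mul_pos (pow_pos (Nat.factorial_pos _) n)
      exact pow_pos (by omega) n
    exact Nat.le_of_mul_le_mul_right key hpos
  refine ⟨N, K, R, hN, hKmul, hupper, hlower, ?_⟩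
  calc R * 2 ^ (n - 2) ≤ R * (n - 1) ^ (n - 2) :=
        Nat.mul_le_mul_left _ (Nat.pow_le_pow_left (by omega) _)
    _ ≤ 16 * n ^ 2 * K := hcomb
lemma final_bounds (n : ℕ) (hn : 3 ≤ n) :
    1 - 16 * (n : ℝ) * (1 / 2) ^ n ≤
      ((Nat.card {g : Fin n → Fin n → Fin n // IsConsecEquiSquare n g} : ℝ) /
          (Nat.card {g : Fin n → Fin n → Fin n // IsEquiSquare n g} : ℝ)) *
        ((n ^ 2)! : ℝ) / (4 * (n : ℝ) ^ (n + 1) * ((n ^ 2 - n)! : ℝ)) ∧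
      ((Nat.card {g : Fin n → Fin n → Fin n // IsConsecEquiSquare n g} : ℝ) /
          (Nat.card {g : Fin n → Fin n → Fin n // IsEquiSquare n g} : ℝ)) *
        ((n ^ 2)! : ℝ) / (4 * (n : ℝ) ^ (n + 1) * ((n ^ 2 - n)! : ℝ)) ≤ 1 := by
  obtain ⟨N, K, R, hN, hKmul, hup, hlow, hR2⟩ := master n hn
  have hΩ := equisquare_count n
  set Ω := Nat.card {g : Fin n → Fin n → Fin n // IsEquiSquare n g} with hΩdef
  have hnpos : (0 : ℝ) < n := by exact_mod_cast (by omega : 0 < n)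
  have hKpos : 0 < K := by
    rcases Nat.eq_zero_or_pos K with h | h
    · rw [h, zero_mul] at hKmul; exact absurd hKmul.symm (Nat.factorial_pos _).ne'
    · exact h
  have hΩpos : 0 < Ω := by
    rcases Nat.eq_zero_or_pos Ω with h | h
    · rw [h, zero_mul] at hΩ; exact absurd hΩ.symm (Nat.factorial_pos _).ne'
    · exact h
  -- real abbreviations
  set a : ℝ := (N : ℝ) with ha
  set o : ℝ := (Ω : ℝ) with ho
  set kk : ℝ := (K : ℝ) with hkk
  set w : ℝ := (((n - 1)!) : ℝ) with hw
  have hopos : (0 : ℝ) < o := by rw [ho]; exact_mod_cast hΩpos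
  have hkpos : (0 : ℝ) < kk := by rw [hkk]; exact_mod_cast hKpos
  have hwpos : (0 : ℝ) < w := by rw [hw]; exact_mod_cast Nat.factorial_pos (n - 1)
  have h1 : o * ((n : ℝ) * w) ^ n = ((n ^ 2)! : ℝ) := by
    have hfact : ((n)! : ℝ) = (n : ℝ) * w := by
      rw [hw]
      have := Nat.mul_factorial_pred (n := n) (by omega)
      push_cast [← this]
      ring
    rw [← hfact, ho]
    exact_mod_cast congrArg (Nat.cast : ℕ → ℝ) hΩ
  have h2 : kk * w ^ n = ((n ^ 2 - n)! : ℝ) := by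
    rw [hkk, hw]
    exact_mod_cast congrArg (Nat.cast : ℕ → ℝ) hKmul
  have hX : (0 : ℝ) < (n : ℝ) ^ n * w ^ n := by positivity
  have h4nk : (0 : ℝ) < 4 * (n : ℝ) * kk := by positivity
  -- the expression equals a / (4 n K)
  have hexpr : (a / o) * ((n ^ 2)! : ℝ) / (4 * (n : ℝ) ^ (n + 1) * ((n ^ 2 - n)! : ℝ)) =
      a / (4 * (n : ℝ) * kk) := by
    rw [← h1, ← h2, mul_pow]
    have hdenom : 4 * (n : ℝ) ^ (n + 1) * (kk * w ^ n) =
        (4 * (n : ℝ) * kk) * ((n : ℝ) ^ n * w ^ n) := by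
      rw [pow_succ]; ring
    rw [hdenom]
    rw [div_eq_div_iff (by positivity) (by positivity)]
    field_simp
  rw [hN, hexpr]
  constructor
  · -- lower bound
    rw [le_div_iff₀ h4nk]
    have hc1 : (4 * (n : ℝ) * kk) ≤ a + (R : ℝ) := by
      have := hlow
      have : ((4 * n * K : ℕ) : ℝ) ≤ ((N + R : ℕ) : ℝ) := by exact_mod_cast this
      push_cast at this
      linarith
    have hc2 : (R : ℝ) ≤ 16 * (n : ℝ) * (1 / 2) ^ n * (4 * (n : ℝ) * kk) := by
      have hcast : (R : ℝ) * (2 : ℝ) ^ (n - 2) ≤ 16 * (n : ℝ) ^ 2 * kk := by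
        have := hR2
        have h' : ((R * 2 ^ (n - 2) : ℕ) : ℝ) ≤ ((16 * n ^ 2 * K : ℕ) : ℝ) := by exact_mod_cast this
        push_cast at h'
        linarith
      have hpow2 : (2 : ℝ) ^ n = 4 * (2 : ℝ) ^ (n - 2) := by
        have hne : 2 + (n - 2) = n := by omega
        calc (2 : ℝ) ^ n = (2 : ℝ) ^ (2 + (n - 2)) := by rw [hne]
          _ = 4 * (2 : ℝ) ^ (n - 2) := by rw [pow_add]; norm_num
      have hp2pos : (0 : ℝ) < (2 : ℝ) ^ (n - 2) := by positivity
      rw [← mul_le_mul_iff_of_pos_right hp2pos]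
      calc (R : ℝ) * (2 : ℝ) ^ (n - 2) ≤ 16 * (n : ℝ) ^ 2 * kk := hcast
        _ = 16 * (n : ℝ) * (1 / 2) ^ n * (4 * (n : ℝ) * kk) * (2 : ℝ) ^ (n - 2) := by
            rw [div_pow, one_pow, hpow2]
            field_simp
    calc (1 - 16 * (n : ℝ) * (1 / 2) ^ n) * (4 * (n : ℝ) * kk)
        = 4 * (n : ℝ) * kk - 16 * (n : ℝ) * (1 / 2) ^ n * (4 * (n : ℝ) * kk) := by ring
      _ ≤ a := by linarith
  · -- upper bound
    rw [div_le_one h4nk]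
    have : ((N : ℕ) : ℝ) ≤ ((4 * n * K : ℕ) : ℝ) := by exact_mod_cast hup
    push_cast at this
    linarith


/-- `|Σ_n|/|Ω_n| ∼ 4·n^{n+1}·(n²−n)!/(n²)!` as `n → ∞`: the ratio tends to `1`. -/
theorem prob_consecEquiSquares_asymp :
    Filter.Tendsto
      (fun n : ℕ =>
        ((Nat.card {g : Fin n → Fin n → Fin n // IsConsecEquiSquare n g} : ℝ) /
            (Nat.card {g : Fin n → Fin n → Fin n // IsEquiSquare n g} : ℝ)) *
          ((n ^ 2)! : ℝ) / (4 * (n : ℝ) ^ (n + 1) * ((n ^ 2 - n)! : ℝ)))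
      Filter.atTop (nhds 1) := by
  have hgeom : Filter.Tendsto (fun n : ℕ => 16 * (n : ℝ) * (1 / 2) ^ n) Filter.atTop (nhds 0) := by
    have h := tendsto_self_mul_const_pow_of_lt_one (r := 1 / 2) (by norm_num) (by norm_num)
    have h16 := h.const_mul (16 : ℝ)
    rw [mul_zero] at h16
    refine h16.congr fun n => ?_
    ring
  have hlo : Filter.Tendsto (fun n : ℕ => 1 - 16 * (n : ℝ) * (1 / 2) ^ n)
      Filter.atTop (nhds 1) := by
    have := (tendsto_const_nhds (x := (1 : ℝ)) (f := Filter.atTop (α := ℕ))).sub hgeom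
    rw [sub_zero] at this
    exact this
  refine tendsto_of_tendsto_of_tendsto_of_le_of_le' hlo tendsto_const_nhds ?_ ?_
  · filter_upwards [Filter.eventually_ge_atTop 3] with n hn
    exact (final_bounds n hn).1
  · filter_upwards [Filter.eventually_ge_atTop 3] with n hn
    exact (final_bounds n hn).2
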